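/- Fix a partition of a countable set X into infinitely many infinite sets X_n, and let I be the collection of subsets of X whose intersection with all but finitely many X_n is finite. Then I is a proper free Borel ideal which is q⁺: for every A ∈ I⁺ and every partition of A into finite sets (F_k), there is S ⊆ A with S ∈ I⁺ and |S ∩ F_k| ≤ 1 for all k. -/

import Mathlib

lemma selector_aux {X : Type} (A : Set X) (Y : ℕ → Set X)
    (hY : ∀ n, (A ∩ Y n).Infinite)
    (F : ℕ → Set X) (hF : ∀ k, (F k).Finite)
    (hFd : Pairwise (Function.onFun Disjoint F))
    (hcov : A ⊆ ⋃ k, F k) :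
    ∃ S : Set X, S ⊆ A ∧ (∀ n, (S ∩ Y n).Infinite) ∧
      ∀ k, (S ∩ F k).Subsingleton := by
  classical
  have hkk : ∀ x : X, ∃ k, x ∈ A → x ∈ F k := by
    intro x
    by_cases hx : x ∈ A
    · obtain ⟨k, hk⟩ := Set.mem_iUnion.mp (hcov hx); exact ⟨k, fun _ => hk⟩
    · exact ⟨0, fun h => absurd h hx⟩
  choose kk hkk using hkk
  have hne : ∀ (n : ℕ) (L : List X),
      ((A ∩ Y n) \ ⋃ x ∈ {a | a ∈ L}, F (kk x)).Nonempty := by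
    intro n L
    refine ((hY n).diff ?_).nonempty
    exact L.finite_toSet.biUnion fun x _ => hF (kk x)
  let pick : ℕ → List X → X := fun n L => (hne n L).some
  have hpick : ∀ n L, pick n L ∈ (A ∩ Y n) \ ⋃ x ∈ {a | a ∈ L}, F (kk x) :=
    fun n L => (hne n L).some_mem
  let G : ℕ → List X := fun n => Nat.rec [] (fun m L => L ++ [pick (Nat.unpair m).1 L]) n
  let g : ℕ → X := fun n => pick (Nat.unpair n).1 (G n)
  have hG : ∀ n, G (n + 1) = G n ++ [g n] := fun n => rfl
  have hmem : ∀ j n, j < n → g j ∈ G n := by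
    intro j n hjn
    induction n with
    | zero => omega
    | succ m ih =>
      rw [hG]
      rcases Nat.lt_succ_iff_lt_or_eq.mp hjn with h | h
      · exact List.mem_append_left _ (ih h)
      · subst h; exact List.mem_append_right _ (List.mem_singleton_self _)
  have hgA : ∀ n, g n ∈ A ∩ Y (Nat.unpair n).1 := fun n => (hpick _ _).1
  have hgnot : ∀ n x, x ∈ G n → g n ∉ F (kk x) := by
    intro n x hx hmemF
    exact (hpick (Nat.unpair n).1 (G n)).2 (Set.mem_biUnion hx hmemF)
  have hginj : Function.Injective g := by
    intro i j hij
    by_contra hne'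
    rcases lt_trichotomy i j with h | h | h
    · exact hgnot j (g i) (hmem i j h) (hij ▸ hkk (g i) (hgA i).1)
    · exact hne' h
    · exact hgnot i (g j) (hmem j i h) (hij ▸ hkk (g j) (hgA j).1)
  refine ⟨Set.range g, ?_, ?_, ?_⟩
  · rintro _ ⟨n, rfl⟩; exact (hgA n).1
  · intro m
    apply Set.infinite_of_injective_forall_mem (f := fun b : ℕ => g (Nat.pair m b))
    · intro a b hab
      exact (Nat.pair_eq_pair.mp (hginj hab)).2
    · intro b
      refine ⟨⟨Nat.pair m b, rfl⟩, ?_⟩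
      have := (hgA (Nat.pair m b)).2
      rwa [Nat.unpair_pair] at this
  · rintro k x ⟨⟨i, rfl⟩, hik⟩ y ⟨⟨j, rfl⟩, hjk⟩
    rcases lt_trichotomy i j with h | h | h
    · exfalso
      have hk : k = kk (g i) := by
        by_contra hne'
        exact Set.disjoint_left.mp (hFd hne') hik (hkk (g i) (hgA i).1)
      exact hgnot j (g i) (hmem i j h) (hk ▸ hjk)
    · rw [h]
    · exfalso
      have hk : k = kk (g j) := by
        by_contra hne'
        exact Set.disjoint_left.mp (hFd hne') hjk (hkk (g j) (hgA j).1)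
      exact hgnot i (g j) (hmem j i h) (hk ▸ hik)

lemma meas_aux {X : Type} [Countable X] (Xp : ℕ → Set X) :
    @MeasurableSet (X → Bool) (borel (X → Bool))
      {f : X → Bool | {n : ℕ | ({x : X | f x = true} ∩ Xp n).Infinite}.Finite} := by
  classical
  letI : MeasurableSpace (X → Bool) := borel (X → Bool)
  haveI : BorelSpace (X → Bool) := ⟨rfl⟩
  have hev : ∀ (x : X) (b : Bool), MeasurableSet {f : X → Bool | f x = b} := by
    intro x b
    have h1 : IsOpen ((fun f : X → Bool => f x) ⁻¹' ({b} : Set Bool)) :=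
      (continuous_apply (A := fun _ : X => Bool) x).isOpen_preimage ({b} : Set Bool) (isOpen_discrete _)
    have h2 : {f : X → Bool | f x = b} = (fun f : X → Bool => f x) ⁻¹' ({b} : Set Bool) := by
      ext f; simp
    rw [h2]; exact h1.measurableSet
  have key : {f : X → Bool | {n : ℕ | ({x : X | f x = true} ∩ Xp n).Infinite}.Finite}
      = ⋃ N : ℕ, ⋂ n : ℕ, ⋂ (_ : N ≤ n),
          ⋃ s : Finset X, ⋂ (x : X) (_ : x ∈ Xp n) (_ : x ∉ s),
            {f : X → Bool | f x = false} := by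
    ext f
    simp only [Set.mem_setOf_eq, Set.mem_iUnion, Set.mem_iInter]
    constructor
    · intro h
      obtain ⟨N, hN⟩ := h.bddAbove
      refine ⟨N + 1, fun n hn => ?_⟩
      have hfin : ({x : X | f x = true} ∩ Xp n).Finite := by
        by_contra hc
        have h2 : n ≤ N := hN hc
        omega
      refine ⟨hfin.toFinset, fun x hx hxs => ?_⟩
      cases hfx : f x with
      | false => rfl
      | true =>
        exact absurd (hfin.mem_toFinset.mpr ⟨hfx, hx⟩) hxs
    · rintro ⟨N, hN⟩
      refine Set.Finite.subset (Set.finite_Iio N) ?_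
      intro n hn
      by_contra hnN
      obtain ⟨s, hs⟩ := hN n (le_of_not_gt (by simpa using hnN))
      refine hn (Set.Finite.subset s.finite_toSet ?_)
      rintro x ⟨hfx, hx⟩
      by_contra hxs
      exact absurd hfx (by simp [hs x hx hxs])
  rw [key]
  refine MeasurableSet.iUnion fun N => MeasurableSet.iInter fun n =>
    MeasurableSet.iInter fun _ => MeasurableSet.iUnion fun s =>
    MeasurableSet.iInter fun x => MeasurableSet.iInter fun _ =>
    MeasurableSet.iInter fun _ => hev x false


/-- for a partition of X into infinitely many infinite sets X_n, the
collection I of sets meeting all but finitely many X_n in a finite set is a proper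
free Borel ideal which is q⁺. -/
theorem statement16 {X : Type} [Countable X] (Xp : ℕ → Set X)
    (hinf : ∀ n, (Xp n).Infinite)
    (hdisj : Pairwise (Function.onFun Disjoint Xp))
    (hpart : (⋃ n, Xp n) = Set.univ)
    (I : Set (Set X))
    (hI : I = {A : Set X | {n : ℕ | (A ∩ Xp n).Infinite}.Finite}) :
    (∀ A ∈ I, ∀ B : Set X, B ⊆ A → B ∈ I) ∧
    (∀ A ∈ I, ∀ B ∈ I, A ∪ B ∈ I) ∧
    (∀ A : Set X, A.Finite → A ∈ I) ∧
    (Set.univ : Set X) ∉ I ∧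
    @MeasurableSet (X → Bool) (borel (X → Bool)) {f : X → Bool | {x : X | f x = true} ∈ I} ∧
    (∀ A : Set X, A ∉ I → ∀ F : ℕ → Set X,
      (∀ k, (F k).Finite) → Pairwise (Function.onFun Disjoint F) → (⋃ k, F k) = A →
      ∃ S : Set X, S ⊆ A ∧ S ∉ I ∧ ∀ k, (S ∩ F k).Subsingleton) := by
  subst hI
  refine ⟨?_, ?_, ?_, ?_, ?_, ?_⟩
  · intro A hA B hBA
    exact hA.subset fun n hn => hn.mono (Set.inter_subset_inter_left _ hBA)
  · intro A hA B hB
    refine (hA.union hB).subset ?_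
    intro n hn
    simp only [Set.mem_setOf_eq, Set.union_inter_distrib_right] at hn
    by_contra hc
    simp only [Set.mem_union, Set.mem_setOf_eq, not_or, Set.not_infinite] at hc
    exact hn (hc.1.union hc.2)
  · intro A hA
    have : {n : ℕ | (A ∩ Xp n).Infinite} = ∅ := by
      ext n
      simp only [Set.mem_setOf_eq, Set.mem_empty_iff_false, iff_false]
      exact fun h => h (hA.subset Set.inter_subset_left)
    simp [Set.mem_setOf_eq, this]
  · intro h
    have : {n : ℕ | ((Set.univ : Set X) ∩ Xp n).Infinite} = Set.univ := by
      ext n; simp [hinf n]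
    rw [Set.mem_setOf_eq, this] at h
    exact Set.infinite_univ h
  · exact meas_aux Xp
  · intro A hA F hFk hFd hFcov
    have hAinf : {n : ℕ | (A ∩ Xp n).Infinite}.Infinite := hA
    set p : ℕ → Prop := fun n => (A ∩ Xp n).Infinite with hp
    have hpinf : {n | p n}.Infinite := hAinf
    have hY : ∀ n, (A ∩ Xp (Nat.nth p n)).Infinite := fun n =>
      Nat.nth_mem_of_infinite hpinf n
    obtain ⟨S, hSA, hSY, hSsub⟩ := selector_aux A (fun n => Xp (Nat.nth p n)) hY F hFk hFd
      (hFcov ▸ subset_rfl)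
    refine ⟨S, hSA, ?_, hSsub⟩
    intro hS
    refine (Set.infinite_range_of_injective (Nat.nth_injective hpinf)).mono ?_ hS
    rintro _ ⟨m, rfl⟩
    exact hSY m
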